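/- There exists a class ℒ of recursive languages such that ℒ ∈ [ℛTxtTdCIndEx_C]_REC but ℒ ∉ [τ(CInd)TxtGBc_C]_REC; that is, some total computable transductive learner CIndEx_C-learns every member of ℒ, but no partial computable Gold-style (full-information) learner that outputs only C-indices on all texts whatsoever can Bc_C-learn every member of ℒ. -/

import Mathlib

namespace InductiveInference

/-- `φ_e` : the `e`-th partial computable function, via the standard numbering
of `Nat.Partrec.Code`. -/
def phi (e : ℕ) : ℕ →. ℕ := (Denumerable.ofNat Nat.Partrec.Code e).eval

/-- `W_e` : the domain of `φ_e`. -/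
def Wset (e : ℕ) : Set ℕ := (phi e).Dom

/-- `e` is a C-index: `φ_e` is total with values in `{0,1}`. -/
def CIndex (e : ℕ) : Prop := ∀ x, phi e x = Part.some 0 ∨ phi e x = Part.some 1

/-- `C_e = {x | φ_e x = 1}`. -/
def Cset (e : ℕ) : Set ℕ := {x | phi e x = Part.some 1}

/-- A language is recursive (decidable). -/
def RecLang (L : Set ℕ) : Prop := ∃ f : ℕ → Bool, Computable f ∧ ∀ x, x ∈ L ↔ f x = true

/-- Texts: total functions `ℕ → ℕ ∪ {#}`; `none` is the pause symbol `#`. -/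
abbrev Text := ℕ → Option ℕ

/-- The content of a text: its range minus the pause symbol. -/
def content (T : Text) : Set ℕ := {x | ∃ n, T n = some x}

/-- The initial segment `T[n] = (T 0, …, T (n-1))`. -/
def initSeg (T : Text) (n : ℕ) : List (Option ℕ) := (List.range n).map T

/-- The (finite) content of the initial segment `T[n]`. -/
def fincontent (T : Text) (n : ℕ) : Finset ℕ := ((initSeg T n).filterMap id).toFinset

/-- A canonical numerical code for a finite set of naturals. -/
def setCode (D : Finset ℕ) : ℕ := Encodable.encode (D.sort (· ≤ ·))

/-- Learners: partial functions on (suitably coded) natural number inputs. -/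
abbrev Learner := ℕ →. ℕ

/-- The learner is partial computable. -/
def PartComputable (h : Learner) : Prop := Nat.Partrec h

/-- The learner is total computable. -/
def TotalComputable (h : Learner) : Prop := Nat.Partrec h ∧ ∀ x, (h x).Dom

/-- Hypothesis sequences (possibly undefined at some points). -/
abbrev HypSeq := ℕ → Part ℕ

/-- Gold-style (full-information) learning: `G(h,T)(i) = h(T[i])`. -/
def Gop (h : Learner) (T : Text) (i : ℕ) : Part ℕ :=
  h (Encodable.encode (initSeg T i))

/-- Partially set-driven learning: `Psd(h,T)(i) = h(content T[i], i)`. -/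
def Psdop (h : Learner) (T : Text) (i : ℕ) : Part ℕ :=
  h (Nat.pair (setCode (fincontent T i)) i)

/-- Set-driven learning: `Sd(h,T)(i) = h(content T[i])`. -/
def Sdop (h : Learner) (T : Text) (i : ℕ) : Part ℕ :=
  h (setCode (fincontent T i))

/-- Iterative learning: the input `none` codes the empty start sequence `ε`,
and `some (e, x)` codes the pair of previous hypothesis `e` and datum `x`. -/
def Itop (h : Learner) (T : Text) : ℕ → Part ℕ
  | 0 => h (Encodable.encode (none : Option (ℕ × Option ℕ)))
  | i + 1 => (Itop h T i).bind fun e =>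
      h (Encodable.encode (some (e, T i) : Option (ℕ × Option ℕ)))

/-- Transductive learning: the learner receives the single (coded) datum
`T i`; the output `0` codes the distinguished symbol `?`, and the output
`e + 1` codes the hypothesis `e`.  The value `?` of the hypothesis sequence
is represented by `Part.none`. -/
def Tdop (h : Learner) (T : Text) : ℕ → Part ℕ
  | 0 => Part.none
  | i + 1 => (h (Encodable.encode (T i))).bind fun v =>
      match v with
      | 0 => Tdop h T i
      | e + 1 => Part.some e

/-- `Ex_C`: syntactic convergence to a single correct C-index. -/
def ExC (p : HypSeq) (T : Text) : Prop :=
  ∃ n₀, (∀ n, n₀ ≤ n → p n = p n₀) ∧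
    ∃ e, p n₀ = Part.some e ∧ CIndex e ∧ Cset e = content T

/-- `Ex_W`: syntactic convergence to a single correct W-index. -/
def ExW (p : HypSeq) (T : Text) : Prop :=
  ∃ n₀, (∀ n, n₀ ≤ n → p n = p n₀) ∧
    ∃ e, p n₀ = Part.some e ∧ Wset e = content T

/-- `Bc_C`: semantic convergence to correct C-indices. -/
def BcC (p : HypSeq) (T : Text) : Prop :=
  ∃ n₀, ∀ n, n₀ ≤ n → ∃ e, p n = Part.some e ∧ CIndex e ∧ Cset e = content T

/-- `Bc_W`: semantic convergence to correct W-indices. -/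
def BcW (p : HypSeq) (T : Text) : Prop :=
  ∃ n₀, ∀ n, n₀ ≤ n → ∃ e, p n = Part.some e ∧ Wset e = content T

/-- `CInd`: every hypothesis output is a C-index. -/
def CIndRes (p : HypSeq) (_T : Text) : Prop :=
  ∀ i e, p i = Part.some e → CIndex e

/-- `T`: the always-true restriction. -/
def TrueRes (_p : HypSeq) (_T : Text) : Prop := True

abbrev InteractionOp := Learner → Text → HypSeq
abbrev Restriction := HypSeq → Text → Prop

/-- Conjunction of restrictions. -/
def andRes (δ δ' : Restriction) : Restriction := fun p T => δ p T ∧ δ' p T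

/-- `h` `Txtβδ`-learns `L`: on every text for `L` the restriction `δ` holds. -/
def Learns (β : InteractionOp) (δ : Restriction) (h : Learner) (L : Set ℕ) : Prop :=
  ∀ T : Text, content T = L → δ (β h T) T

/-- The restriction `α` holds for `h` on all texts whatsoever. -/
def OnAllTexts (β : InteractionOp) (α : Restriction) (h : Learner) : Prop :=
  ∀ T : Text, α (β h T) T

/-- A class of recursive languages. -/
def IsRecClass (ℒ : Set (Set ℕ)) : Prop := ∀ L ∈ ℒ, RecLang L

/-- `[𝒞Txtβδ]_REC`: classes of recursive languages learnable by some
learner from `C` under interaction operator `β` and restriction `δ`. -/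
def LearnableREC (C : Learner → Prop) (β : InteractionOp) (δ : Restriction) :
    Set (Set (Set ℕ)) :=
  {ℒ | IsRecClass ℒ ∧ ∃ h, C h ∧ ∀ L ∈ ℒ, Learns β δ h L}

/-- `[τ(α)𝒞Txtβδ]_REC`: as above, where additionally `α` must hold on
arbitrary texts. -/
def TauLearnableREC (C : Learner → Prop) (α : Restriction) (β : InteractionOp)
    (δ : Restriction) : Set (Set (Set ℕ)) :=
  {ℒ | IsRecClass ℒ ∧ ∃ h, C h ∧ OnAllTexts β α h ∧ ∀ L ∈ ℒ, Learns β δ h L}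

/-! ### auxiliary -/

section SepAux

open Nat.Partrec (Code)
open Nat.Partrec.Code

/-- The separating class. -/
def SepClass : Set (Set ℕ) :=
  {L | ∃ e, CIndex e ∧ Cset e = L ∧ Nat.pair 1 e ∈ L ∧
      ∀ x ∈ L, (Nat.unpair x).1 = 1 → x = Nat.pair 1 e}

lemma phi_partrec (e : ℕ) : Partrec (phi e) :=
  Nat.Partrec.Code.eval_part.comp (Computable.const _) Computable.id

lemma cindex_dom {e : ℕ} (he : CIndex e) (x : ℕ) : (phi e x).Dom := by
  rcases he x with h | h <;> simp [h]

lemma mem_cset_iff {e x : ℕ} : x ∈ Cset e ↔ phi e x = Part.some 1 := Iff.rfl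

lemma recLang_of_cindex {e : ℕ} (he : CIndex e) : RecLang (Cset e) := by
  have hdom : ∀ x, ((phi e x).map fun v => decide (v = 1)).Dom := fun x => by
    simpa using cindex_dom he x
  have h1 : Partrec fun x => (phi e x).map fun v => decide (v = 1) :=
    (phi_partrec e).map
      (Computable.to₂ ((Primrec.eq.comp Primrec.snd (Primrec.const 1)).decide.to_comp))
  refine ⟨fun x => ((phi e x).map fun v => decide (v = 1)).get (hdom x),
    h1.of_eq fun x => (Part.some_get (hdom x)).symm, fun x => ?_⟩
  rw [Part.get_eq_iff_eq_some]
  rcases he x with h | h <;> simp [mem_cset_iff, h, Part.map_some]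

/-! ### positive side: a total transductive learner -/

def tdG : ℕ → ℕ
  | 0 => 0
  | k + 1 => if (Nat.unpair k).1 = 1 then (Nat.unpair k).2 + 1 else 0

def tdL : Learner := fun n => Part.some (tdG n)

lemma tdG_primrec : Primrec tdG := by
  have h : Primrec fun k : ℕ => if (Nat.unpair k).1 = 1 then (Nat.unpair k).2 + 1 else 0 :=
    Primrec.ite (Primrec.eq.comp (Primrec.fst.comp Primrec.unpair) (Primrec.const 1))
      (Primrec.succ.comp (Primrec.snd.comp Primrec.unpair)) (Primrec.const 0)
  exact (Primrec.nat_casesOn₁ 0 h).of_eq fun n => by cases n <;> rfl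

lemma tdL_tc : TotalComputable tdL :=
  ⟨Partrec.nat_iff.1 tdG_primrec.to_comp, fun _ => trivial⟩

lemma tdL_step (T : Text) (i : ℕ) :
    Tdop tdL T (i + 1) = match tdG (Encodable.encode (T i)) with
      | 0 => Tdop tdL T i
      | e + 1 => Part.some e := by
  show (tdL (Encodable.encode (T i))).bind _ = _
  exact Part.bind_some _ _

lemma tdG_none : tdG (Encodable.encode (none : Option ℕ)) = 0 := rfl

lemma tdG_some (x : ℕ) : tdG (Encodable.encode (some x : Option ℕ)) =
    if (Nat.unpair x).1 = 1 then (Nat.unpair x).2 + 1 else 0 := rfl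

section PosProof

variable {T : Text} {e : ℕ}

lemma tdop_cases (hcont : ∀ x ∈ content T, (Nat.unpair x).1 = 1 → x = Nat.pair 1 e) :
    ∀ n, Tdop tdL T n = Part.none ∨ Tdop tdL T n = Part.some e := by
  intro n
  induction n with
  | zero => left; rfl
  | succ i ih =>
    rw [tdL_step]
    cases hTi : T i with
    | none => rw [tdG_none]; exact ih
    | some x =>
      by_cases hx : (Nat.unpair x).1 = 1
      · have hxe : x = Nat.pair 1 e := hcont x ⟨i, hTi⟩ hx
        subst hxe
        rw [tdG_some]
        simp [Nat.unpair_pair]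
      · rw [tdG_some, if_neg hx]; exact ih

lemma tdop_from (hcont : ∀ x ∈ content T, (Nat.unpair x).1 = 1 → x = Nat.pair 1 e)
    {i0 : ℕ} (h0 : T i0 = some (Nat.pair 1 e)) :
    ∀ n, i0 + 1 ≤ n → Tdop tdL T n = Part.some e := by
  intro n hn
  induction n with
  | zero => omega
  | succ i ih =>
    rw [tdL_step]
    rcases Nat.lt_or_ge i0 i with hi | hi
    · have hTd := ih hi
      cases hTi : T i with
      | none => rw [tdG_none]; exact hTd
      | some x =>
        by_cases hx : (Nat.unpair x).1 = 1
        · have hxe : x = Nat.pair 1 e := hcont x ⟨i, hTi⟩ hx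
          subst hxe
          rw [tdG_some]
          simp [Nat.unpair_pair]
        · rw [tdG_some, if_neg hx]; exact hTd
    · have : i0 = i := by omega
      subst this
      rw [h0, tdG_some]
      simp [Nat.unpair_pair]

end PosProof

theorem sep_pos : SepClass ∈ LearnableREC TotalComputable Tdop (andRes CIndRes ExC) := by
  refine ⟨fun L hL => ?_, tdL, tdL_tc, ?_⟩
  · obtain ⟨e, he, hC, -, -⟩ := hL
    exact hC ▸ recLang_of_cindex he
  · rintro L ⟨e, he, hC, hmark, huniq⟩ T hT
    have hcont : ∀ x ∈ content T, (Nat.unpair x).1 = 1 → x = Nat.pair 1 e := by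
      intro x hx h1; exact huniq x (hT ▸ hx) h1
    obtain ⟨i0, hi0⟩ : ∃ i, T i = some (Nat.pair 1 e) := by
      have : Nat.pair 1 e ∈ content T := hT ▸ hmark
      exact this
    constructor
    · intro j e' hj
      rcases tdop_cases hcont j with h | h
      · rw [h] at hj; exact absurd hj (by simp)
      · rw [h] at hj
        have : e = e' := Part.some_inj.mp hj
        exact this ▸ he
    · refine ⟨i0 + 1, fun n hn => ?_, e, tdop_from hcont hi0 _ le_rfl, he, hC.trans hT.symm⟩
      rw [tdop_from hcont hi0 n hn, tdop_from hcont hi0 _ le_rfl]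

/-! ### The diagonalization machine -/

abbrev MSt : Type := List ℕ × ℕ × ℕ × ℕ × ℕ

def pEnc (σ : List ℕ) (i : ℕ) : ℕ :=
  Encodable.encode ((List.range i).map fun j => σ.getD j 0)

def mstep (ch : Code) (S : MSt) : MSt :=
  if S.2.1 = 0 then
    match evaln (Nat.unpair S.1.length).2 ch
        (pEnc S.1 (S.2.2.1 + (Nat.unpair S.1.length).1)) with
    | some cc =>
        if S.2.2.1 + (Nat.unpair S.1.length).1 ≤ S.1.length then
          (S.1 ++ [0], 1, S.2.2.1 + (Nat.unpair S.1.length).1 + 1, cc, S.2.2.2.2)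
        else (S.1 ++ [0], 0, S.2.2.1, S.2.2.2.1, S.2.2.2.2 + 1)
    | none => (S.1 ++ [0], 0, S.2.2.1, S.2.2.2.1, S.2.2.2.2 + 1)
  else
    match evaln S.1.length (Denumerable.ofNat Code S.2.2.2.1) (Nat.pair 0 S.2.2.2.2) with
    | some v =>
        if v = 0 then
          (S.1 ++ [Nat.pair 0 S.2.2.2.2 + 1], 0, S.2.2.1, S.2.2.2.1, S.2.2.2.2 + 1)
        else (S.1 ++ [0], 0, S.2.2.1, S.2.2.2.1, S.2.2.2.2 + 1)
    | none => (S.1 ++ [0], S.2)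

def mrun (ch : Code) (E t : ℕ) : MSt := (mstep ch)^[t] ([Nat.pair 1 E + 1], 0, 0, 0, 0)

lemma pEnc_primrec : Primrec₂ pEnc :=
  (Primrec.encode.comp (Primrec.list_map (Primrec.list_range.comp Primrec.snd)
    (((Primrec.list_getD 0).comp (Primrec.fst.comp Primrec.fst) Primrec.snd).to₂)))

lemma mstep_primrec (ch : Code) : Primrec (mstep ch) := by
  have hσ : Primrec fun S : MSt => S.1 := Primrec.fst
  have h2 : Primrec fun S : MSt => S.2 := Primrec.snd
  have hph : Primrec fun S : MSt => S.2.1 := Primrec.fst.comp Primrec.snd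
  have hb : Primrec fun S : MSt => S.2.2.1 :=
    Primrec.fst.comp (Primrec.snd.comp Primrec.snd)
  have hc : Primrec fun S : MSt => S.2.2.2.1 :=
    Primrec.fst.comp (Primrec.snd.comp (Primrec.snd.comp Primrec.snd))
  have hm : Primrec fun S : MSt => S.2.2.2.2 :=
    Primrec.snd.comp (Primrec.snd.comp (Primrec.snd.comp Primrec.snd))
  have hlen : Primrec fun S : MSt => S.1.length := Primrec.list_length.comp hσ
  have hup : Primrec fun S : MSt => Nat.unpair S.1.length := Primrec.unpair.comp hlen
  have hd : Primrec fun S : MSt => (Nat.unpair S.1.length).1 := Primrec.fst.comp hup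
  have hs : Primrec fun S : MSt => (Nat.unpair S.1.length).2 := Primrec.snd.comp hup
  have hi : Primrec fun S : MSt => S.2.2.1 + (Nat.unpair S.1.length).1 :=
    Primrec.nat_add.comp hb hd
  have hpe : Primrec fun S : MSt => pEnc S.1 (S.2.2.1 + (Nat.unpair S.1.length).1) :=
    pEnc_primrec.comp hσ hi
  have happ0 : Primrec fun S : MSt => S.1 ++ [0] :=
    Primrec.list_concat.comp hσ (Primrec.const 0)
  have hfail : Primrec fun S : MSt =>
      ((S.1 ++ [0], 0, S.2.2.1, S.2.2.2.1, S.2.2.2.2 + 1) : MSt) :=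
    happ0.pair ((Primrec.const 0).pair (hb.pair (hc.pair (Primrec.succ.comp hm))))
  have hevA : Primrec fun S : MSt =>
      evaln (Nat.unpair S.1.length).2 ch (pEnc S.1 (S.2.2.1 + (Nat.unpair S.1.length).1)) :=
    primrec_evaln.comp ((hs.pair (Primrec.const ch)).pair hpe)
  have hAfound : Primrec fun p : MSt × ℕ =>
      (if p.1.2.2.1 + (Nat.unpair p.1.1.length).1 ≤ p.1.1.length then
        (p.1.1 ++ [0], 1, p.1.2.2.1 + (Nat.unpair p.1.1.length).1 + 1, p.2, p.1.2.2.2.2)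
      else (p.1.1 ++ [0], 0, p.1.2.2.1, p.1.2.2.2.1, p.1.2.2.2.2 + 1) : MSt) := by
    refine Primrec.ite (Primrec.nat_le.comp (hi.comp Primrec.fst) (hlen.comp Primrec.fst))
      ?_ (hfail.comp Primrec.fst)
    exact (happ0.comp Primrec.fst).pair ((Primrec.const 1).pair
      ((Primrec.succ.comp (hi.comp Primrec.fst)).pair
        (Primrec.snd.pair (hm.comp Primrec.fst))))
  have hA : Primrec fun S : MSt =>
      (match evaln (Nat.unpair S.1.length).2 ch
          (pEnc S.1 (S.2.2.1 + (Nat.unpair S.1.length).1)) with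
      | some cc =>
          if S.2.2.1 + (Nat.unpair S.1.length).1 ≤ S.1.length then
            (S.1 ++ [0], 1, S.2.2.1 + (Nat.unpair S.1.length).1 + 1, cc, S.2.2.2.2)
          else (S.1 ++ [0], 0, S.2.2.1, S.2.2.2.1, S.2.2.2.2 + 1)
      | none => (S.1 ++ [0], 0, S.2.2.1, S.2.2.2.1, S.2.2.2.2 + 1) : MSt) := by
    refine (Primrec.option_casesOn hevA hfail hAfound.to₂).of_eq fun S => ?_
    cases evaln (Nat.unpair S.1.length).2 ch
      (pEnc S.1 (S.2.2.1 + (Nat.unpair S.1.length).1)) <;> rfl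
  have hevB : Primrec fun S : MSt =>
      evaln S.1.length (Denumerable.ofNat Code S.2.2.2.1) (Nat.pair 0 S.2.2.2.2) :=
    primrec_evaln.comp ((hlen.pair ((Primrec.ofNat Code).comp hc)).pair
      (Primrec₂.natPair.comp (Primrec.const 0) hm))
  have hBnone : Primrec fun S : MSt => ((S.1 ++ [0], S.2) : MSt) := happ0.pair h2
  have hBfound : Primrec fun p : MSt × ℕ =>
      (if p.2 = 0 then
        (p.1.1 ++ [Nat.pair 0 p.1.2.2.2.2 + 1], 0, p.1.2.2.1, p.1.2.2.2.1, p.1.2.2.2.2 + 1)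
      else (p.1.1 ++ [0], 0, p.1.2.2.1, p.1.2.2.2.1, p.1.2.2.2.2 + 1) : MSt) := by
    refine Primrec.ite (Primrec.eq.comp Primrec.snd (Primrec.const 0)) ?_
      (hfail.comp Primrec.fst)
    exact (Primrec.list_concat.comp (hσ.comp Primrec.fst)
        (Primrec.succ.comp (Primrec₂.natPair.comp (Primrec.const 0) (hm.comp Primrec.fst)))).pair
      ((Primrec.const 0).pair ((hb.comp Primrec.fst).pair
        ((hc.comp Primrec.fst).pair (Primrec.succ.comp (hm.comp Primrec.fst)))))
  have hB : Primrec fun S : MSt =>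
      (match evaln S.1.length (Denumerable.ofNat Code S.2.2.2.1) (Nat.pair 0 S.2.2.2.2) with
      | some v =>
          if v = 0 then
            (S.1 ++ [Nat.pair 0 S.2.2.2.2 + 1], 0, S.2.2.1, S.2.2.2.1, S.2.2.2.2 + 1)
          else (S.1 ++ [0], 0, S.2.2.1, S.2.2.2.1, S.2.2.2.2 + 1)
      | none => (S.1 ++ [0], S.2) : MSt) := by
    refine (Primrec.option_casesOn hevB hBnone hBfound.to₂).of_eq fun S => ?_
    cases evaln S.1.length (Denumerable.ofNat Code S.2.2.2.1) (Nat.pair 0 S.2.2.2.2) <;> rfl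
  exact (Primrec.ite (Primrec.eq.comp hph (Primrec.const 0)) hA hB).of_eq fun S => rfl

lemma mrun_primrec (ch : Code) : Primrec₂ (mrun ch) := by
  have hinit : Primrec fun E : ℕ => (([Nat.pair 1 E + 1], 0, 0, 0, 0) : MSt) :=
    (Primrec.list_cons.comp
      (Primrec.succ.comp (Primrec₂.natPair.comp (Primrec.const 1) Primrec.id))
      (Primrec.const [])).pair (Primrec.const (0, 0, 0, 0))
  exact Primrec.nat_iterate Primrec.snd (hinit.comp Primrec.fst)
    ((mstep_primrec ch).comp Primrec.snd).to₂

lemma mrun_zero (ch : Code) (E : ℕ) : mrun ch E 0 = ([Nat.pair 1 E + 1], 0, 0, 0, 0) := rfl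

lemma mrun_succ (ch : Code) (E t : ℕ) : mrun ch E (t + 1) = mstep ch (mrun ch E t) :=
  Function.iterate_succ_apply' _ _ _

attribute [irreducible] mstep mrun

set_option maxHeartbeats 1000000 in
/-- The diagonal partial function family, to which the recursion theorem is applied. -/
def diagF (ch : Code) (cE : Code) (x : ℕ) : Part ℕ :=
  Option.casesOn (if (Nat.unpair x).1 = 0 then some (Nat.unpair x).2 else none)
    (Part.some
      (if (Nat.unpair x).1 = 1 ∧ (Nat.unpair x).2 = Encodable.encode cE then 1 else 0))
    fun y =>
      (Nat.rfind fun t =>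
          Part.some (decide (y < (mrun ch (Encodable.encode cE) t).2.2.2.2))).map
        fun t => if Nat.pair 0 y + 1 ∈ (mrun ch (Encodable.encode cE) t).1 then 1 else 0

lemma partrec_option_casesOn_right {α β σ : Type*} [Primcodable α] [Primcodable β]
    [Primcodable σ] {o : α → Option β} {f : α → σ} {g : α → β →. σ} (ho : Computable o)
    (hf : Computable f) (hg : Partrec₂ g) :
    @Partrec _ σ _ _ fun a => Option.casesOn (o a) (Part.some (f a)) (g a) :=
  (Partrec.nat_casesOn_right (Primrec.encode.to_comp.comp ho) hf
    (((Computable.decode.comp Computable.snd).ofOption.bind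
      (hg.comp (Computable.fst.comp Computable.fst) Computable.snd).to₂).to₂)).of_eq fun a => by
    cases o a <;> simp [Encodable.encodek]

set_option maxHeartbeats 1000000 in
lemma diagF_partrec (ch : Code) : Partrec₂ (diagF ch) := by
  have ho : Computable fun p : Code × ℕ =>
      (if (Nat.unpair p.2).1 = 0 then some (Nat.unpair p.2).2 else none : Option ℕ) :=
    (Primrec.ite
      (Primrec.eq.comp (Primrec.fst.comp (Primrec.unpair.comp Primrec.snd)) (Primrec.const 0))
      (Primrec.option_some.comp (Primrec.snd.comp (Primrec.unpair.comp Primrec.snd)))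
      (Primrec.const none)).to_comp
  have hf : Computable fun p : Code × ℕ =>
      (if (Nat.unpair p.2).1 = 1 ∧ (Nat.unpair p.2).2 = Encodable.encode p.1 then 1 else 0 : ℕ) := by
    refine Primrec.to_comp (Primrec.ite (PrimrecPred.and ?_ ?_) (Primrec.const 1) (Primrec.const 0))
    · exact Primrec.eq.comp (Primrec.fst.comp (Primrec.unpair.comp Primrec.snd)) (Primrec.const 1)
    · exact Primrec.eq.comp (Primrec.snd.comp (Primrec.unpair.comp Primrec.snd))
        (Primrec.encode.comp Primrec.fst)
  have hg : Partrec₂ fun (p : Code × ℕ) (y : ℕ) =>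
      ((Nat.rfind fun t =>
          Part.some (decide (y < (mrun ch (Encodable.encode p.1) t).2.2.2.2))).map
        fun t => if Nat.pair 0 y + 1 ∈ (mrun ch (Encodable.encode p.1) t).1 then 1 else 0) := by
    have hrf : Partrec fun q : (Code × ℕ) × ℕ => Nat.rfind fun t =>
        Part.some (decide (q.2 < (mrun ch (Encodable.encode q.1.1) t).2.2.2.2)) := by
      apply Partrec.rfind
      apply Computable₂.partrec₂
      have hq : Primrec fun r : ((Code × ℕ) × ℕ) × ℕ =>
          decide (r.1.2 < (mrun ch (Encodable.encode r.1.1.1) r.2).2.2.2.2) :=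
        PrimrecPred.decide <| Primrec.nat_lt.comp (Primrec.snd.comp Primrec.fst)
          (Primrec.snd.comp (Primrec.snd.comp (Primrec.snd.comp (Primrec.snd.comp
            ((mrun_primrec ch).comp
              (Primrec.encode.comp (Primrec.fst.comp (Primrec.fst.comp Primrec.fst)))
              Primrec.snd)))))
      exact Computable.to₂ (Primrec.to_comp hq)
    have hmapf : Primrec fun r : ((Code × ℕ) × ℕ) × ℕ =>
        (if Nat.pair 0 r.1.2 + 1 ∈ (mrun ch (Encodable.encode r.1.1.1) r.2).1 then 1 else 0 : ℕ) := by
      have hlist : Primrec fun r : ((Code × ℕ) × ℕ) × ℕ =>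
          (mrun ch (Encodable.encode r.1.1.1) r.2).1 :=
        Primrec.fst.comp ((mrun_primrec ch).comp
          (Primrec.encode.comp (Primrec.fst.comp (Primrec.fst.comp Primrec.fst))) Primrec.snd)
      have hv : Primrec fun r : ((Code × ℕ) × ℕ) × ℕ => Nat.pair 0 r.1.2 + 1 :=
        Primrec.succ.comp (Primrec₂.natPair.comp (Primrec.const 0)
          (Primrec.snd.comp Primrec.fst))
      have hmem : PrimrecPred fun r : ((Code × ℕ) × ℕ) × ℕ =>
          Nat.pair 0 r.1.2 + 1 ∈ (mrun ch (Encodable.encode r.1.1.1) r.2).1 := by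
        refine PrimrecPred.of_eq
          (Primrec.nat_lt.comp (Primrec.list_idxOf.comp hv hlist)
            (Primrec.list_length.comp hlist)) fun r => ?_
        exact List.idxOf_lt_length_iff
      exact Primrec.ite hmem (Primrec.const 1) (Primrec.const 0)
    exact (hrf.map (Computable.to₂ (Primrec.to_comp hmapf))).to₂
  exact partrec_option_casesOn_right ho hf hg

def mσ (ch : Code) (E t : ℕ) : List ℕ := (mrun ch E t).1
def mph (ch : Code) (E t : ℕ) : ℕ := (mrun ch E t).2.1
def mb (ch : Code) (E t : ℕ) : ℕ := (mrun ch E t).2.2.1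
def mc (ch : Code) (E t : ℕ) : ℕ := (mrun ch E t).2.2.2.1
def mm (ch : Code) (E t : ℕ) : ℕ := (mrun ch E t).2.2.2.2
def ment (ch : Code) (E n : ℕ) : ℕ := (mσ ch E n).getD n 0

/-- The text generated by the machine. -/
def mT (ch : Code) (E : ℕ) : Text := fun n =>
  match ment ch E n with
  | 0 => none
  | k + 1 => some k

lemma mstep_cases (ch : Code) (E t : ℕ) :
    (mph ch E t = 0 ∧ ∃ cc,
        evaln (Nat.unpair (mσ ch E t).length).2 ch
            (pEnc (mσ ch E t) (mb ch E t + (Nat.unpair (mσ ch E t).length).1)) = some cc ∧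
        mb ch E t + (Nat.unpair (mσ ch E t).length).1 ≤ (mσ ch E t).length ∧
        mrun ch E (t+1) = (mσ ch E t ++ [0], 1,
          mb ch E t + (Nat.unpair (mσ ch E t).length).1 + 1, cc, mm ch E t)) ∨
    (mph ch E t = 0 ∧
        (evaln (Nat.unpair (mσ ch E t).length).2 ch
            (pEnc (mσ ch E t) (mb ch E t + (Nat.unpair (mσ ch E t).length).1)) = none ∨
          ¬ mb ch E t + (Nat.unpair (mσ ch E t).length).1 ≤ (mσ ch E t).length) ∧
        mrun ch E (t+1) = (mσ ch E t ++ [0], 0, mb ch E t, mc ch E t, mm ch E t + 1)) ∨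
    (mph ch E t ≠ 0 ∧
        evaln (mσ ch E t).length (Denumerable.ofNat Code (mc ch E t))
          (Nat.pair 0 (mm ch E t)) = none ∧
        mrun ch E (t+1) = (mσ ch E t ++ [0], (mrun ch E t).2)) ∨
    (mph ch E t ≠ 0 ∧
        evaln (mσ ch E t).length (Denumerable.ofNat Code (mc ch E t))
          (Nat.pair 0 (mm ch E t)) = some 0 ∧
        mrun ch E (t+1) = (mσ ch E t ++ [Nat.pair 0 (mm ch E t) + 1], 0,
          mb ch E t, mc ch E t, mm ch E t + 1)) ∨
    (mph ch E t ≠ 0 ∧ ∃ v, v ≠ 0 ∧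
        evaln (mσ ch E t).length (Denumerable.ofNat Code (mc ch E t))
          (Nat.pair 0 (mm ch E t)) = some v ∧
        mrun ch E (t+1) = (mσ ch E t ++ [0], 0, mb ch E t, mc ch E t, mm ch E t + 1)) := by
  have h := mrun_succ ch E t
  unfold mstep at h
  by_cases hph : (mrun ch E t).2.1 = 0
  · rw [if_pos hph] at h
    rcases hev : evaln (Nat.unpair (mrun ch E t).1.length).2 ch
        (pEnc (mrun ch E t).1
          ((mrun ch E t).2.2.1 + (Nat.unpair (mrun ch E t).1.length).1)) with _ | cc
    · simp only [hev] at h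
      exact Or.inr (Or.inl ⟨hph, Or.inl hev, h⟩)
    · simp only [hev] at h
      by_cases hle : (mrun ch E t).2.2.1 + (Nat.unpair (mrun ch E t).1.length).1 ≤
          (mrun ch E t).1.length
      · rw [if_pos hle] at h
        exact Or.inl ⟨hph, cc, hev, hle, h⟩
      · rw [if_neg hle] at h
        exact Or.inr (Or.inl ⟨hph, Or.inr hle, h⟩)
  · rw [if_neg hph] at h
    rcases hev : evaln (mrun ch E t).1.length (Denumerable.ofNat Code (mrun ch E t).2.2.2.1)
        (Nat.pair 0 (mrun ch E t).2.2.2.2) with _ | v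
    · simp only [hev] at h
      exact Or.inr (Or.inr (Or.inl ⟨hph, hev, h⟩))
    · simp only [hev] at h
      by_cases hv : v = 0
      · subst hv
        rw [if_pos rfl] at h
        exact Or.inr (Or.inr (Or.inr (Or.inl ⟨hph, hev, h⟩)))
      · rw [if_neg hv] at h
        exact Or.inr (Or.inr (Or.inr (Or.inr ⟨hph, v, hv, hev, h⟩)))

lemma mσ_shape (ch : Code) (E t : ℕ) : ∃ a, mσ ch E (t+1) = mσ ch E t ++ [a] ∧
    (a = 0 ∨ (a = Nat.pair 0 (mm ch E t) + 1 ∧ mm ch E (t+1) = mm ch E t + 1 ∧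
      mph ch E t ≠ 0 ∧ mph ch E (t+1) = 0)) := by
  rcases mstep_cases ch E t with ⟨_, cc, _, _, hr⟩ | ⟨_, _, hr⟩ | ⟨_, _, hr⟩ |
    ⟨hph, _, hr⟩ | ⟨_, v, _, _, hr⟩
  · exact ⟨0, by simp [mσ, hr], Or.inl rfl⟩
  · exact ⟨0, by simp [mσ, hr], Or.inl rfl⟩
  · exact ⟨0, by simp [mσ, hr], Or.inl rfl⟩
  · exact ⟨_, by simp [mσ, hr], Or.inr ⟨rfl, by simp [mm, hr], hph, by simp [mph, hr]⟩⟩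
  · exact ⟨0, by simp [mσ, hr], Or.inl rfl⟩

lemma mσ_len (ch : Code) (E : ℕ) : ∀ t, (mσ ch E t).length = t + 1 := by
  intro t
  induction t with
  | zero => simp [mσ, mrun_zero]
  | succ t ih =>
    obtain ⟨a, ha, -⟩ := mσ_shape ch E t
    simp [ha, ih]

lemma mm_succ (ch : Code) (E t : ℕ) :
    mm ch E (t+1) = mm ch E t ∨ mm ch E (t+1) = mm ch E t + 1 := by
  rcases mstep_cases ch E t with ⟨_, cc, _, _, hr⟩ | ⟨_, _, hr⟩ | ⟨_, _, hr⟩ |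
    ⟨_, _, hr⟩ | ⟨_, v, _, _, hr⟩ <;> simp [mm, hr]

lemma mm_mono (ch : Code) (E : ℕ) : Monotone (mm ch E) := by
  apply monotone_nat_of_le_succ
  intro t
  rcases mm_succ ch E t with h | h <;> omega

lemma mb_mono (ch : Code) (E : ℕ) : Monotone (mb ch E) := by
  apply monotone_nat_of_le_succ
  intro t
  rcases mstep_cases ch E t with ⟨_, cc, _, _, hr⟩ | ⟨_, _, hr⟩ | ⟨_, _, hr⟩ |
    ⟨_, _, hr⟩ | ⟨_, v, _, _, hr⟩ <;> simp [mb, hr] <;> omega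

lemma ment_succ (ch : Code) (E t : ℕ) {a : ℕ} (ha : mσ ch E (t+1) = mσ ch E t ++ [a]) :
    ment ch E (t+1) = a := by
  rw [ment, ha, List.getD_append_right _ _ _ _ (by rw [mσ_len]),
    mσ_len]
  simp

lemma ment_stable (ch : Code) (E : ℕ) : ∀ {n t}, n ≤ t → (mσ ch E t).getD n 0 = ment ch E n := by
  intro n t h
  induction t with
  | zero =>
    have hn : n = 0 := by omega
    subst hn
    simp [ment, mσ, mrun_zero]
  | succ t ih =>
    rcases Nat.lt_or_ge n (t+1) with h1 | h1
    · obtain ⟨a, ha, -⟩ := mσ_shape ch E t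
      rw [ha, List.getD_append _ _ _ _ (by rw [mσ_len]; omega)]
      exact ih (by omega)
    · have : n = t + 1 := by omega
      subst this; rfl

lemma ment_shape (ch : Code) (E t : ℕ) :
    ment ch E (t+1) = 0 ∨ (ment ch E (t+1) = Nat.pair 0 (mm ch E t) + 1 ∧
      mm ch E (t+1) = mm ch E t + 1 ∧ mph ch E t ≠ 0 ∧ mph ch E (t+1) = 0) := by
  obtain ⟨a, ha, h⟩ := mσ_shape ch E t
  rw [ment_succ ch E t ha]
  exact h

lemma ment_zero (ch : Code) (E : ℕ) : ment ch E 0 = Nat.pair 1 E + 1 := by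
  simp [ment, mσ, mrun_zero]

lemma mT_some_iff (ch : Code) (E : ℕ) {n k : ℕ} :
    mT ch E n = some k ↔ ment ch E n = k + 1 := by
  unfold mT
  cases h : ment ch E n <;> simp [h]

lemma encode_list_option : ∀ l : List (Option ℕ),
    Encodable.encode l = Encodable.encode (l.map Encodable.encode) := by
  intro l
  induction l with
  | nil => rfl
  | cons a l ih => simp [Encodable.encode_list_cons, ih]

lemma pEnc_eq (ch : Code) (E : ℕ) {i t : ℕ} (h : i ≤ t + 1) :
    pEnc (mσ ch E t) i = Encodable.encode (initSeg (mT ch E) i) := by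
  unfold pEnc initSeg
  rw [encode_list_option, List.map_map]
  congr 1
  apply List.map_congr_left
  intro j hj
  rw [List.mem_range] at hj
  have hjt : j ≤ t := by omega
  rw [ment_stable ch E hjt]
  show ment ch E j = Encodable.encode (mT ch E j)
  unfold mT
  cases hm : ment ch E j <;> simp [hm]

lemma mph_zero (ch : Code) (E : ℕ) : mph ch E 0 = 0 := by simp [mph, mrun_zero]

lemma mB_inv (ch : Code) (E : ℕ) : ∀ t, mph ch E t ≠ 0 →
    ∃ i, i + 1 = mb ch E t ∧
      (mc ch E t) ∈ eval ch (Encodable.encode (initSeg (mT ch E) i)) := by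
  intro t
  induction t with
  | zero => intro hph; exact absurd (mph_zero ch E) hph
  | succ t ih =>
    intro hph
    rcases mstep_cases ch E t with ⟨hp0, cc, hev, hle, hr⟩ | ⟨_, _, hr⟩ | ⟨hp, hev, hr⟩ |
      ⟨_, _, hr⟩ | ⟨_, v, _, _, hr⟩
    · refine ⟨mb ch E t + (Nat.unpair (mσ ch E t).length).1, by simp [mb, hr], ?_⟩
      have hcc : cc ∈ evaln (Nat.unpair (mσ ch E t).length).2 ch
          (pEnc (mσ ch E t) (mb ch E t + (Nat.unpair (mσ ch E t).length).1)) := hev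
      rw [pEnc_eq ch E (by rw [mσ_len]; rwa [mσ_len] at hle)] at hcc
      have := evaln_sound hcc
      have hmc : mc ch E (t+1) = cc := by simp [mc, hr]
      rw [hmc]
      exact this
    · exact absurd (by simp [mph, hr] : mph ch E (t+1) = 0) hph
    · obtain ⟨i, h1, h2⟩ := ih hp
      refine ⟨i, ?_, ?_⟩
      · rw [show mb ch E (t+1) = mb ch E t by simp [mb, hr]]; exact h1
      · rw [show mc ch E (t+1) = mc ch E t by simp [mc, hr]]; exact h2
    · exact absurd (by simp [mph, hr] : mph ch E (t+1) = 0) hph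
    · exact absurd (by simp [mph, hr] : mph ch E (t+1) = 0) hph

lemma completion_after (ch : Code) (E : ℕ)
    (hCI : ∀ i e', eval ch (Encodable.encode (initSeg (mT ch E) i)) = Part.some e' → CIndex e')
    (t : ℕ) (hph : mph ch E t ≠ 0) :
    ∃ u, t ≤ u ∧ mph ch E u ≠ 0 ∧ mph ch E (u+1) = 0 := by
  by_contra hno
  push_neg at hno
  have hall : ∀ u, t ≤ u → mph ch E u ≠ 0 ∧ mc ch E u = mc ch E t ∧ mm ch E u = mm ch E t := by
    intro u hu
    induction u, hu using Nat.le_induction with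
    | base => exact ⟨hph, rfl, rfl⟩
    | succ u hu ih =>
      obtain ⟨h1, h2, h3⟩ := ih
      have h4 : mph ch E (u+1) ≠ 0 := hno u hu h1
      rcases mstep_cases ch E u with ⟨hp, _, _, _, hr⟩ | ⟨hp, _, hr⟩ | ⟨hp, _, hr⟩ |
        ⟨hp, _, hr⟩ | ⟨hp, v, _, _, hr⟩
      · exact absurd hp h1
      · exact absurd hp h1
      · refine ⟨h4, ?_, ?_⟩
        · rw [(by simp [mc, hr] : mc ch E (u+1) = mc ch E u)]; exact h2
        · rw [(by simp [mm, hr] : mm ch E (u+1) = mm ch E u)]; exact h3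
      · exact absurd (by simp [mph, hr] : mph ch E (u+1) = 0) h4
      · exact absurd (by simp [mph, hr] : mph ch E (u+1) = 0) h4
  obtain ⟨i, -, hmem⟩ := mB_inv ch E t hph
  have hc : CIndex (mc ch E t) := hCI i _ (Part.eq_some_iff.mpr hmem)
  have hv : ∃ v, phi (mc ch E t) (Nat.pair 0 (mm ch E t)) = Part.some v := by
    rcases hc (Nat.pair 0 (mm ch E t)) with h | h
    exacts [⟨0, h⟩, ⟨1, h⟩]
  obtain ⟨v, hv⟩ := hv
  have hv' : v ∈ eval (Denumerable.ofNat Code (mc ch E t)) (Nat.pair 0 (mm ch E t)) := by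
    rw [show eval (Denumerable.ofNat Code (mc ch E t)) = phi (mc ch E t) from rfl, hv]
    exact Part.mem_some_iff.mpr rfl
  obtain ⟨k, hk⟩ := evaln_complete.mp hv'
  set u := max t k with hu
  obtain ⟨h1, h2, h3⟩ := hall u (le_max_left _ _)
  rcases mstep_cases ch E u with ⟨hp, _, _, _, hr⟩ | ⟨hp, _, hr⟩ | ⟨hp, hev, hr⟩ |
    ⟨hp, _, hr⟩ | ⟨hp, v', _, _, hr⟩
  · exact absurd hp h1
  · exact absurd hp h1
  · have hmono : v ∈ evaln (mσ ch E u).length (Denumerable.ofNat Code (mc ch E u))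
        (Nat.pair 0 (mm ch E u)) := by
      rw [h2, h3, mσ_len]
      exact evaln_mono (le_trans (le_max_right t k) (Nat.le_succ u)) hk
    rw [hev] at hmono
    exact absurd hmono (by simp)
  · exact absurd (by simp [mph, hr] : mph ch E (u+1) = 0) (hno u (le_max_left _ _) h1)
  · exact absurd (by simp [mph, hr] : mph ch E (u+1) = 0) (hno u (le_max_left _ _) h1)

lemma completion_spec (ch : Code) (E t : ℕ) (h1 : mph ch E t ≠ 0) (h2 : mph ch E (t+1) = 0) :
    mm ch E (t+1) = mm ch E t + 1 ∧
    ((evaln (t+1) (Denumerable.ofNat Code (mc ch E t)) (Nat.pair 0 (mm ch E t)) = some 0 ∧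
        ment ch E (t+1) = Nat.pair 0 (mm ch E t) + 1) ∨
      (∃ v, v ≠ 0 ∧
        evaln (t+1) (Denumerable.ofNat Code (mc ch E t)) (Nat.pair 0 (mm ch E t)) = some v ∧
        ment ch E (t+1) = 0)) := by
  rcases mstep_cases ch E t with ⟨hp, _, _, _, hr⟩ | ⟨hp, _, hr⟩ | ⟨hp, hev, hr⟩ |
    ⟨hp, hev, hr⟩ | ⟨hp, v, hv, hev, hr⟩
  · exact absurd hp h1
  · exact absurd hp h1
  · exact absurd (by rw [← (by simp [mph, hr] : mph ch E (t+1) = mph ch E t)]; exact h2) hp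
  · refine ⟨by simp [mm, hr], Or.inl ⟨?_, ment_succ ch E t (by simp [mσ, hr])⟩⟩
    rwa [mσ_len] at hev
  · refine ⟨by simp [mm, hr], Or.inr ⟨v, hv, ?_, ment_succ ch E t (by simp [mσ, hr])⟩⟩
    rwa [mσ_len] at hev

lemma mm_progress (ch : Code) (E : ℕ)
    (hCI : ∀ i e', eval ch (Encodable.encode (initSeg (mT ch E) i)) = Part.some e' → CIndex e')
    (t : ℕ) : ∃ t', t ≤ t' ∧ mm ch E t < mm ch E t' := by
  by_cases hph : mph ch E t = 0
  · rcases mstep_cases ch E t with ⟨hp, _, _, _, hr⟩ | ⟨hp, _, hr⟩ | ⟨hp, _, hr⟩ |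
      ⟨hp, _, hr⟩ | ⟨hp, v, _, _, hr⟩
    · have hph1 : mph ch E (t+1) ≠ 0 := by simp [mph, hr]
      obtain ⟨u, hu, h1, h2⟩ := completion_after ch E hCI (t+1) hph1
      obtain ⟨hmm, -⟩ := completion_spec ch E u h1 h2
      have hle : mm ch E t ≤ mm ch E u := mm_mono ch E (by omega)
      exact ⟨u+1, by omega, by omega⟩
    · refine ⟨t+1, by omega, ?_⟩
      rw [show mm ch E (t+1) = mm ch E t + 1 by simp [mm, hr]]
      omega
    · exact absurd hph hp
    · exact absurd hph hp
    · exact absurd hph hp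
  · obtain ⟨u, hu, h1, h2⟩ := completion_after ch E hCI t hph
    obtain ⟨hmm, -⟩ := completion_spec ch E u h1 h2
    have hle : mm ch E t ≤ mm ch E u := mm_mono ch E hu
    exact ⟨u+1, by omega, by omega⟩

lemma mm_unbounded (ch : Code) (E : ℕ)
    (hCI : ∀ i e', eval ch (Encodable.encode (initSeg (mT ch E) i)) = Part.some e' → CIndex e') :
    ∀ y, ∃ t, y < mm ch E t := by
  intro y
  induction y with
  | zero =>
    obtain ⟨t, -, h⟩ := mm_progress ch E hCI 0
    refine ⟨t, ?_⟩
    have h0 : mm ch E 0 = 0 := by simp [mm, mrun_zero]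
    omega
  | succ y ih =>
    obtain ⟨t, ht⟩ := ih
    obtain ⟨t', -, h⟩ := mm_progress ch E hCI t
    exact ⟨t', by omega⟩

lemma scenA (ch : Code) (E t₀ : ℕ) (hA : ∀ t, t₀ ≤ t → mph ch E t = 0) :
    ∀ t, t₀ ≤ t → mb ch E t = mb ch E t₀ := by
  intro t ht
  induction t, ht using Nat.le_induction with
  | base => rfl
  | succ t ht ih =>
    rcases mstep_cases ch E t with ⟨hp, _, _, _, hr⟩ | ⟨hp, _, hr⟩ | ⟨hp, _, hr⟩ |
      ⟨hp, _, hr⟩ | ⟨hp, v, _, _, hr⟩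
    · have h0 := hA (t+1) (by omega)
      rw [(by simp [mph, hr] : mph ch E (t+1) = 1)] at h0
      exact absurd h0 one_ne_zero
    · rw [(by simp [mb, hr] : mb ch E (t+1) = mb ch E t)]
      exact ih
    · exact absurd (hA t ht) hp
    · exact absurd (hA t ht) hp
    · exact absurd (hA t ht) hp

lemma flip_exists {P : ℕ → Prop} {a b : ℕ} (hab : a ≤ b) (ha : P a) (hb : ¬ P b) :
    ∃ u, a ≤ u ∧ P u ∧ ¬ P (u+1) := by
  by_contra hno
  push_neg at hno
  have hall : ∀ u, a ≤ u → P u := by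
    intro u hu
    induction u, hu using Nat.le_induction with
    | base => exact ha
    | succ u hu ih => exact hno u hu ih
  exact hb (hall b hab)

theorem sep_neg : SepClass ∉ TauLearnableREC PartComputable CIndRes Gop BcC := by
  rintro ⟨-, h, hPC, hOn, hLearn⟩
  obtain ⟨ch, hch⟩ := exists_code.1 hPC
  obtain ⟨c₀, hc₀⟩ := fixed_point₂ (diagF_partrec ch)
  set E := Encodable.encode c₀ with hE
  have hphiE : ∀ x, phi E x = diagF ch c₀ x := by
    intro x
    show (Denumerable.ofNat Code (Encodable.encode c₀)).eval x = _
    rw [Denumerable.ofNat_encode, hc₀]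
  have hGop : ∀ i, Gop h (mT ch E) i = eval ch (Encodable.encode (initSeg (mT ch E) i)) := by
    intro i; rw [Gop, hch]
  have hCI : ∀ i e', eval ch (Encodable.encode (initSeg (mT ch E) i)) = Part.some e' →
      CIndex e' := by
    intro i e' he'
    exact hOn (mT ch E) i e' (by rw [hGop i, he'])
  have hphi0 : ∀ y, ∃ t', (y < mm ch E t') ∧ (∀ s, s < t' → ¬ y < mm ch E s) ∧
      phi E (Nat.pair 0 y) = Part.some (if Nat.pair 0 y + 1 ∈ mσ ch E t' then 1 else 0) := by
    intro y
    have hdom : (Nat.rfind fun t => Part.some (decide (y < (mrun ch E t).2.2.2.2))).Dom := by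
      refine Nat.rfind_dom.2 ?_
      obtain ⟨t, ht⟩ := mm_unbounded ch E hCI y
      exact ⟨t, by simpa [Part.mem_some_iff, eq_comm, mm] using ht, fun {m} _ => trivial⟩
    set t' := (Nat.rfind fun t => Part.some (decide (y < (mrun ch E t).2.2.2.2))).get hdom
      with ht'
    have hmem : t' ∈ Nat.rfind fun t => Part.some (decide (y < (mrun ch E t).2.2.2.2)) :=
      Part.get_mem hdom
    refine ⟨t', ?_, ?_, ?_⟩
    · have := Nat.rfind_spec hmem
      simpa [Part.mem_some_iff, eq_comm, mm] using this
    · intro s hs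
      have := Nat.rfind_min hmem hs
      simpa [Part.mem_some_iff, eq_comm, mm] using this
    · rw [hphiE]
      have hrf : (Nat.rfind fun t => Part.some (decide (y < (mrun ch E t).2.2.2.2))) =
          Part.some t' := Part.eq_some_iff.mpr hmem
      unfold diagF
      simp only [Nat.unpair_pair, ↓reduceIte]
      rw [← hE, hrf, Part.map_some]
      rfl
  
  have hphiO : ∀ x, (Nat.unpair x).1 ≠ 0 →
      phi E x = Part.some (if (Nat.unpair x).1 = 1 ∧ (Nat.unpair x).2 = E then 1 else 0) := by
    intro x hx
    rw [hphiE]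
    unfold diagF
    rw [if_neg hx, ← hE]
  have hCIE : CIndex E := by
    intro x
    by_cases hx : (Nat.unpair x).1 = 0
    · have hx' : x = Nat.pair 0 ((Nat.unpair x).2) := by
        conv_lhs => rw [← Nat.pair_unpair x]
        rw [hx]
      obtain ⟨t', -, -, hval⟩ := hphi0 ((Nat.unpair x).2)
      rw [hx']
      by_cases hm : Nat.pair 0 ((Nat.unpair x).2) + 1 ∈ mσ ch E t'
      · right; rw [hval, if_pos hm]
      · left; rw [hval, if_neg hm]
    · by_cases hc : (Nat.unpair x).1 = 1 ∧ (Nat.unpair x).2 = E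
      · right; rw [hphiO x hx, if_pos hc]
      · left; rw [hphiO x hx, if_neg hc]
  have hCset : Cset E = content (mT ch E) := by
    ext x
    by_cases hx : (Nat.unpair x).1 = 0
    · have hx' : x = Nat.pair 0 ((Nat.unpair x).2) := by
        conv_lhs => rw [← Nat.pair_unpair x]
        rw [hx]
      set y := (Nat.unpair x).2 with hy
      obtain ⟨t', hlt, hmin, hval⟩ := hphi0 y
      rw [mem_cset_iff, hx', hval]
      constructor
      · intro h1
        have hmm : Nat.pair 0 y + 1 ∈ mσ ch E t' := by
          by_contra hh
          rw [if_neg hh] at h1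
          simp at h1
        obtain ⟨n, hn⟩ := List.mem_iff_getElem?.mp hmm
        have hlen : n < t' + 1 := by
          have := List.getElem?_eq_some_iff.mp hn
          obtain ⟨hl, -⟩ := this
          rwa [mσ_len] at hl
        have hgd : (mσ ch E t').getD n 0 = Nat.pair 0 y + 1 := by
          rw [List.getD_eq_getElem?_getD, hn]; rfl
        have hent : ment ch E n = Nat.pair 0 y + 1 := by
          rw [← ment_stable ch E (show n ≤ t' by omega)]
          exact hgd
        exact ⟨n, (mT_some_iff ch E).mpr hent⟩
      · rintro ⟨n, hn⟩
        have hent := (mT_some_iff ch E).mp hn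
        cases n with
        | zero =>
          exfalso
          rw [ment_zero] at hent
          have hpp : Nat.pair 1 E = Nat.pair 0 y := by omega
          have := congrArg (fun z => (Nat.unpair z).1) hpp
          simp [Nat.unpair_pair] at this
        | succ s =>
          rcases ment_shape ch E s with h0 | ⟨hpair, hmms, -, -⟩
          · omega
          · have hmy : mm ch E s = y := by
              have hpp : Nat.pair 0 (mm ch E s) = Nat.pair 0 y := by omega
              have := congrArg (fun z => (Nat.unpair z).2) hpp
              simpa [Nat.unpair_pair] using this
            have h1 : t' ≤ s + 1 := by
              by_contra hh
              exact (hmin (s+1) (by omega)) (by rw [hmms, hmy]; omega)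
            have h2 : ¬ t' ≤ s := by
              intro hh
              have := mm_mono ch E hh
              omega
            have ht's : t' = s + 1 := by omega
            have hgd : (mσ ch E t').getD (s+1) 0 = Nat.pair 0 y + 1 := by
              rw [ht's]; exact hent
            have hlt2 : s + 1 < (mσ ch E t').length := by rw [mσ_len, ht's]; omega
            have hmm : Nat.pair 0 y + 1 ∈ mσ ch E t' := by
              have hmem2 := List.getElem_mem hlt2
              rw [← List.getD_eq_getElem (mσ ch E t') 0 hlt2, hgd] at hmem2
              exact hmem2
            rw [if_pos hmm]
    · rw [mem_cset_iff, hphiO x hx]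
      constructor
      · intro h1
        have hcond : (Nat.unpair x).1 = 1 ∧ (Nat.unpair x).2 = E := by
          by_contra hh
          rw [if_neg hh] at h1
          simp at h1
        have hxE : x = Nat.pair 1 E := by
          conv_lhs => rw [← Nat.pair_unpair x]
          rw [hcond.1, hcond.2]
        exact ⟨0, by rw [hxE]; exact (mT_some_iff ch E).mpr (ment_zero ch E)⟩
      · rintro ⟨n, hn⟩
        have hent := (mT_some_iff ch E).mp hn
        cases n with
        | zero =>
          rw [ment_zero] at hent
          have hxE : x = Nat.pair 1 E := by omega
          rw [if_pos (by rw [hxE, Nat.unpair_pair]; exact ⟨rfl, rfl⟩)]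
        | succ s =>
          exfalso
          rcases ment_shape ch E s with h0 | ⟨hpair, -, -, -⟩
          · omega
          · have hxp : x = Nat.pair 0 (mm ch E s) := by omega
            rw [hxp, Nat.unpair_pair] at hx
            simp at hx
  have hSep : content (mT ch E) ∈ SepClass := by
    refine ⟨E, hCIE, hCset, ?_, ?_⟩
    · exact ⟨0, (mT_some_iff ch E).mpr (ment_zero ch E)⟩
    · intro x hxmem hx1
      rw [← hCset, mem_cset_iff, hphiO x (by omega)] at hxmem
      have hcond : (Nat.unpair x).1 = 1 ∧ (Nat.unpair x).2 = E := by
        by_contra hh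
        rw [if_neg hh] at hxmem
        simp at hxmem
      conv_lhs => rw [← Nat.pair_unpair x]
      rw [hx1, hcond.2]
  obtain ⟨n₀, hBc⟩ := hLearn _ hSep (mT ch E) rfl
  by_cases hP : ∃ t₀, ∀ t, t₀ ≤ t → mph ch E t = 0
  · -- scenario (i): the machine eventually searches forever, so h diverges cofinally
    obtain ⟨t₀, hA⟩ := hP
    set b₀ := mb ch E t₀ with hb₀
    set i := max n₀ b₀ with hi
    have hbi : b₀ ≤ i := le_max_right _ _
    obtain ⟨e', hsome, -, -⟩ := hBc i (le_max_left _ _)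
    rw [hGop] at hsome
    obtain ⟨k, hk⟩ := evaln_complete.mp
      (show e' ∈ eval ch (Encodable.encode (initSeg (mT ch E) i)) by
        rw [hsome]; exact Part.mem_some_iff.mpr rfl)
    set s := max k (max (t₀ + 1) (i + 1)) with hs
    have hsk : k ≤ s := le_max_left _ _
    have hst₀ : t₀ + 1 ≤ s := le_trans (le_max_left _ _) (le_max_right _ _)
    have hsi : i + 1 ≤ s := le_trans (le_max_right _ _) (le_max_right _ _)
    set n' := Nat.pair (i - b₀) s with hn'
    have hsn : s ≤ n' := Nat.right_le_pair _ _
    set t := n' - 1 with htd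
    have htn : t + 1 = n' := by omega
    have htt0 : t₀ ≤ t := by omega
    have hpht : mph ch E t = 0 := hA t htt0
    have hbt : mb ch E t = b₀ := scenA ch E t₀ hA t htt0
    have hup : Nat.unpair (mσ ch E t).length = (i - b₀, s) := by
      rw [mσ_len, htn, hn', Nat.unpair_pair]
    have hieq : mb ch E t + (Nat.unpair (mσ ch E t).length).1 = i := by
      rw [hup, hbt]; simp; omega
    rcases mstep_cases ch E t with ⟨-, cc, -, -, hr⟩ | ⟨-, hcond, -⟩ | ⟨hp, -, -⟩ |
      ⟨hp, -, -⟩ | ⟨hp, -, -, -, -⟩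
    · have h0 := hA (t+1) (by omega)
      rw [(by simp [mph, hr] : mph ch E (t+1) = 1)] at h0
      exact absurd h0 one_ne_zero
    · rcases hcond with hnone | hle
      · rw [hieq, hup] at hnone
        simp only at hnone
        rw [pEnc_eq ch E (show i ≤ t + 1 by omega)] at hnone
        have hk' : e' ∈ evaln s ch (Encodable.encode (initSeg (mT ch E) i)) :=
          evaln_mono hsk hk
        rw [hnone] at hk'
        exact absurd hk' (by simp)
      · apply hle
        rw [hieq, mσ_len, htn]
        omega
    · exact absurd hpht hp
    · exact absurd hpht hp
    · exact absurd hpht hp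
  · -- scenario (ii): infinitely many diagonalizations
    push_neg at hP
    have hU : ∀ N, ∃ t, N ≤ mb ch E t := by
      intro N
      induction N with
      | zero => exact ⟨0, Nat.zero_le _⟩
      | succ N ih =>
        obtain ⟨t, ht⟩ := ih
        have htrans : ∃ u, t ≤ u ∧ mph ch E u = 0 ∧ mph ch E (u+1) ≠ 0 := by
          by_cases hpht : mph ch E t = 0
          · obtain ⟨t₁, ht₁, hph₁⟩ := hP t
            exact flip_exists (P := fun w => mph ch E w = 0) ht₁ hpht hph₁
          · obtain ⟨u₀, hu₀, h1, h2⟩ := completion_after ch E hCI t hpht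
            obtain ⟨t₁, ht₁, hph₁⟩ := hP (u₀ + 1)
            obtain ⟨u, hu, h3, h4⟩ := flip_exists (P := fun w => mph ch E w = 0) ht₁ h2 hph₁
            exact ⟨u, by omega, h3, h4⟩
        obtain ⟨u, hu, h1, h2⟩ := htrans
        rcases mstep_cases ch E u with ⟨-, cc, -, -, hr⟩ | ⟨-, -, hr⟩ | ⟨hp, -, -⟩ |
          ⟨hp, -, -⟩ | ⟨hp, -, -, -, -⟩
        · refine ⟨u + 1, ?_⟩
          have hmb : mb ch E (u+1) =
              mb ch E u + (Nat.unpair (mσ ch E u).length).1 + 1 := by simp [mb, hr]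
          have hmono := mb_mono ch E hu
          omega
        · exact absurd (by simp [mph, hr] : mph ch E (u+1) = 0) h2
        · exact absurd h1 hp
        · exact absurd h1 hp
        · exact absurd h1 hp
    obtain ⟨t, ht⟩ := hU (n₀ + 1)
    have hcomp : ∃ u, t ≤ u ∧ mph ch E u ≠ 0 ∧ mph ch E (u+1) = 0 := by
      by_cases hpht : mph ch E t = 0
      · obtain ⟨t₁, ht₁, hph₁⟩ := hP t
        obtain ⟨u, hu, h1, h2⟩ := completion_after ch E hCI t₁ hph₁
        exact ⟨u, by omega, h1, h2⟩
      · exact completion_after ch E hCI t hpht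
    obtain ⟨u, hu, h1, h2⟩ := hcomp
    obtain ⟨i, hib, hmem⟩ := mB_inv ch E u h1
    have hbu : n₀ + 1 ≤ mb ch E u := le_trans ht (mb_mono ch E hu)
    have hin₀ : n₀ ≤ i := by omega
    obtain ⟨e', hsome, hCIe', hsete'⟩ := hBc i hin₀
    rw [hGop] at hsome
    have hce' : mc ch E u = e' := by
      have hm2 := hmem
      rw [hsome] at hm2
      exact Part.mem_some_iff.mp hm2
    obtain ⟨hmm1, hdia⟩ := completion_spec ch E u h1 h2
    rcases hdia with ⟨hev, hment⟩ | ⟨v, hv0, hev, hment⟩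
    · have h0mem : (0 : ℕ) ∈ phi (mc ch E u) (Nat.pair 0 (mm ch E u)) :=
        evaln_sound (Option.mem_def.mpr hev)
      have hnot : Nat.pair 0 (mm ch E u) ∉ Cset (mc ch E u) := by
        rw [mem_cset_iff]
        intro hcontra
        rw [hcontra] at h0mem
        simpa using Part.mem_some_iff.mp h0mem
      have hmemT : Nat.pair 0 (mm ch E u) ∈ content (mT ch E) :=
        ⟨u + 1, (mT_some_iff ch E).mpr hment⟩
      rw [← hsete', ← hce'] at hmemT
      exact hnot hmemT
    · have hvmem : v ∈ phi (mc ch E u) (Nat.pair 0 (mm ch E u)) :=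
        evaln_sound (Option.mem_def.mpr hev)
      have hCIc : CIndex (mc ch E u) := by rw [hce']; exact hCIe'
      have hv1 : phi (mc ch E u) (Nat.pair 0 (mm ch E u)) = Part.some 1 := by
        rcases hCIc (Nat.pair 0 (mm ch E u)) with hc0 | hc1
        · rw [hc0] at hvmem
          exact absurd (Part.mem_some_iff.mp hvmem) hv0
        · exact hc1
      have hmemT : Nat.pair 0 (mm ch E u) ∈ content (mT ch E) := by
        rw [← hsete', ← hce']
        exact hv1
      obtain ⟨n, hn⟩ := hmemT
      have hent := (mT_some_iff ch E).mp hn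
      cases n with
      | zero =>
        rw [ment_zero] at hent
        have hpp : Nat.pair 1 E = Nat.pair 0 (mm ch E u) := by omega
        have := congrArg (fun z => (Nat.unpair z).1) hpp
        simp [Nat.unpair_pair] at this
      | succ s =>
        rcases ment_shape ch E s with h0 | ⟨hpair, hmms, -, -⟩
        · omega
        · have hms : mm ch E s = mm ch E u := by
            have hpp : Nat.pair 0 (mm ch E s) = Nat.pair 0 (mm ch E u) := by omega
            have := congrArg (fun z => (Nat.unpair z).2) hpp
            simpa [Nat.unpair_pair] using this
          rcases lt_trichotomy s u with hsu | hsu | hsu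
          · have := mm_mono ch E (show s + 1 ≤ u by omega)
            omega
          · subst hsu
            omega
          · have := mm_mono ch E (show u + 1 ≤ s by omega)
            omega

end SepAux

/-- There is a class of recursive languages in `[ℛTxtTdCIndEx_C]_REC` but not
in `[τ(CInd)TxtGBc_C]_REC`. -/
theorem total_td_cind_not_tau_cind_g_bcC :
    ∃ ℒ : Set (Set ℕ),
      ℒ ∈ LearnableREC TotalComputable Tdop (andRes CIndRes ExC) ∧
      ℒ ∉ TauLearnableREC PartComputable CIndRes Gop BcC := by
  exact ⟨SepClass, sep_pos, sep_neg⟩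

end InductiveInference
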